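/- Let x, y, w, z be nonnegative reals and 1 ≤ p ≤ 2. Then (x + z)^{1/p} ≤ ( Tr | [[x^{1/p}, y^{1/p}],[w^{1/p}, z^{1/p}]] |^p )^{1/p}, i.e. x + z ≤ g(B) where B = [[x,y],[w,z]] and g is as in the subadditivity lemma. -/

import Mathlib

set_option maxHeartbeats 1000000

open scoped Matrix


-- increment lemma
lemma incr_lemma {p v u t : ℝ} (hp : 1 ≤ p) (hv : 0 ≤ v) (hvu : v ≤ u) (ht : 0 ≤ t) :
    (v + t) ^ p - v ^ p ≤ (u + t) ^ p - u ^ p := by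
  rcases eq_or_lt_of_le ht with rfl | ht
  · simp
  rcases eq_or_lt_of_le hvu with rfl | hvu
  · simp
  have hu : 0 ≤ u := hv.trans hvu.le
  have hconv := convexOn_rpow hp
  have h1 := hconv.secant_mono (a := v) (x := v + t) (y := u + t)
    (by simp [hv]) (by simp [Set.mem_Ici]; linarith) (by simp [Set.mem_Ici]; linarith)
    (by intro h; nlinarith) (by intro h; nlinarith) (by linarith)
  have h2 := hconv.secant_mono (a := u + t) (x := v) (y := u)
    (by simp [Set.mem_Ici]; linarith) (by simp [hv]) (by simp [Set.mem_Ici]; linarith)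
    (by intro h; nlinarith) (by intro h; nlinarith) hvu.le
  -- h1 : ((v+t)^p - v^p)/t ≤ ((u+t)^p - v^p)/(u+t-v)
  -- h2 : (v^p - (u+t)^p)/(v-(u+t)) ≤ (u^p - (u+t)^p)/(u-(u+t))
  have e1 : v + t - v = t := by ring
  have e2 : u - (u + t) = -t := by ring
  rw [e1] at h1
  rw [e2] at h2
  have e3 : (v ^ p - (u + t) ^ p) / (v - (u + t)) = ((u+t)^p - v^p) / (u + t - v) := by
    rw [← neg_div_neg_eq]; ring_nf
  rw [e3] at h2
  have h4 : (u ^ p - (u + t) ^ p) / (-t) = ((u+t)^p - u^p) / t := by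
    rw [div_neg, ← neg_div]; ring_nf
  rw [h4] at h2
  have := h1.trans h2
  have hm := mul_le_mul_of_nonneg_right this ht.le
  rwa [div_mul_cancel₀ _ ht.ne', div_mul_cancel₀ _ ht.ne'] at hm

lemma maj_lemma {p v u v' u' : ℝ} (hp : 1 ≤ p) (hv : 0 ≤ v) (hvu : v ≤ u)
    (hv' : 0 ≤ v') (hvu' : v' ≤ u') (huu : u ≤ u') (hsum : u + v ≤ u' + v') :
    u ^ p + v ^ p ≤ u' ^ p + v' ^ p := by
  rcases le_or_gt v v' with h | h
  · have h1 : u ^ p ≤ u' ^ p := Real.rpow_le_rpow (hv.trans hvu) huu (by linarith)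
    have h2 : v ^ p ≤ v' ^ p := Real.rpow_le_rpow hv h (by linarith)
    linarith
  · set t := v - v' with htd
    have ht : 0 < t := by simp [htd]; linarith
    have hvv' : v' ≤ u := by linarith
    have hincr : (v' + t) ^ p - v' ^ p ≤ (u + t) ^ p - u ^ p :=
      incr_lemma hp hv' hvv' ht.le
    have h3 : (u + t) ^ p ≤ u' ^ p :=
      Real.rpow_le_rpow (by linarith) (by linarith) (by linarith)
    have hv't : v' + t = v := by ring
    rw [hv't] at hincr
    linarith

lemma sv_lemma {p a b c d l1 l2 : ℝ} (hp : 1 ≤ p)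
    (ha : 0 ≤ a) (hb : 0 ≤ b) (hc : 0 ≤ c) (hd : 0 ≤ d)
    (hl1 : 0 ≤ l1) (hl2 : 0 ≤ l2)
    (hsum : l1 + l2 = a^2 + b^2 + c^2 + d^2)
    (hprod : l1 * l2 = (a*d - b*c)^2) :
    a ^ p + d ^ p ≤ l1 ^ (p/2) + l2 ^ (p/2) := by
  -- order the eigenvalues
  wlog hl : l2 ≤ l1 generalizing l1 l2
  · rw [add_comm (l1 ^ (p/2))]
    exact this hl2 hl1 (by linarith) (by linarith) (le_of_not_ge hl)
  -- order a, d
  wlog had : d ≤ a generalizing a b c d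
  · have := this hd hc hb ha (by linarith) (by nlinarith) (le_of_not_ge had)
    linarith
  set s1 := Real.sqrt l1 with hs1
  set s2 := Real.sqrt l2 with hs2
  have hs1n : 0 ≤ s1 := Real.sqrt_nonneg _
  have hs2n : 0 ≤ s2 := Real.sqrt_nonneg _
  have hs1sq : s1 ^ 2 = l1 := Real.sq_sqrt hl1
  have hs2sq : s2 ^ 2 = l2 := Real.sq_sqrt hl2
  -- l1 ≥ a^2 : since (l1 - (a²+c²)) * (l2 - (a²+c²)) = -(ab+cd)^2 ≤ 0 and l1 ≥ l2
  have key1 : (l1 - (a^2+c^2)) * (l2 - (a^2+c^2)) = -((a*b+c*d)^2) := by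
    linear_combination hprod - (a^2+c^2)*hsum
  have key2 : (l1 - (b^2+d^2)) * (l2 - (b^2+d^2)) = -((a*b+c*d)^2) := by
    linear_combination hprod - (b^2+d^2)*hsum
  have hl1a : a^2 ≤ l1 := by nlinarith [sq_nonneg (a*b+c*d), sq_nonneg c]
  have hl1d : d^2 ≤ l1 := by nlinarith [sq_nonneg (a*b+c*d), sq_nonneg b]
  have has1 : a ≤ s1 := by
    have h := Real.sqrt_le_sqrt hl1a
    rwa [Real.sqrt_sq ha] at h
  have hds1 : d ≤ s1 := by
    have h := Real.sqrt_le_sqrt hl1d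
    rwa [Real.sqrt_sq hd] at h
  have hs12 : s1 * s2 = |a*d - b*c| := by
    rw [hs1, hs2, ← Real.sqrt_mul hl1, hprod, Real.sqrt_sq_eq_abs]
  have hads : a + d ≤ s1 + s2 := by
    have hsq : (a + d)^2 ≤ (s1 + s2)^2 := by
      have habs : 2*a*d ≤ b^2 + c^2 + 2*|a*d - b*c| := by
        rcases abs_cases (a*d - b*c) with ⟨he, _⟩ | ⟨he, _⟩ <;> rw [he] <;> nlinarith [sq_nonneg (b-c), sq_nonneg (b+c), mul_nonneg ha hd, mul_nonneg hb hc]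
      nlinarith [habs, hs12, hs1sq, hs2sq, hsum]
    have := Real.sqrt_le_sqrt hsq
    rwa [Real.sqrt_sq (by linarith), Real.sqrt_sq (by linarith)] at this
  have hs21 : s2 ≤ s1 := Real.sqrt_le_sqrt hl
  have hmaj := maj_lemma hp hd had hs2n hs21 has1 hads
  have hrw1 : s1 ^ p = l1 ^ (p/2) := by
    rw [hs1, Real.sqrt_eq_rpow, ← Real.rpow_mul hl1]
    congr 1; ring
  have hrw2 : s2 ^ p = l2 ^ (p/2) := by
    rw [hs2, Real.sqrt_eq_rpow, ← Real.rpow_mul hl2]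
    congr 1; ring
  rw [hrw1, hrw2] at hmaj
  linarith

-- trace = sum of eigenvalues for a real hermitian matrix
lemma trace_eq_sum_eig {n : Type*} [Fintype n] [DecidableEq n] {A : Matrix n n ℝ}
    (hA : A.IsHermitian) : A.trace = ∑ i, hA.eigenvalues i := by
  conv_lhs => rw [hA.spectral_theorem]
  rw [Unitary.conjStarAlgAut_apply, Matrix.trace_mul_cycle]
  have : (star (hA.eigenvectorUnitary : Matrix n n ℝ)) * (hA.eigenvectorUnitary : Matrix n n ℝ) = 1 :=
    Matrix.mem_unitaryGroup_iff'.mp hA.eigenvectorUnitary.2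
  rw [this, Matrix.one_mul, Matrix.trace_diagonal]
  rfl

/-- `g(A) = Tr |[[a^{1/p}, b^{1/p}],[c^{1/p}, d^{1/p}]]|^p` where `|X| = (X*X)^{1/2}`. -/
noncomputable def gfun (p : ℝ) (A : Matrix (Fin 2) (Fin 2) ℝ) : ℝ :=
  ∑ i, (Matrix.isHermitian_conjTranspose_mul_self
      (A.map fun x => x ^ (1 / p))).eigenvalues i ^ (p / 2)

theorem diag_trace_le_g (p x y w z : ℝ) (hp1 : 1 ≤ p) (hp2 : p ≤ 2)
    (hx : 0 ≤ x) (hy : 0 ≤ y) (hw : 0 ≤ w) (hz : 0 ≤ z) :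
    (x + z) ^ (1 / p) ≤ gfun p !![x, y; w, z] ^ (1 / p) ∧
      x + z ≤ gfun p !![x, y; w, z] := by
  have hp0 : p ≠ 0 := by linarith
  set A := (!![x, y; w, z] : Matrix (Fin 2) (Fin 2) ℝ).map (fun t => t ^ (1/p)) with hA
  have hAe : A = !![x ^ (1/p), y ^ (1/p); w ^ (1/p), z ^ (1/p)] := by
    rw [hA]; ext i j; fin_cases i <;> fin_cases j <;> simp [Matrix.map_apply]
  set hM := Matrix.isHermitian_conjTranspose_mul_self A with hMdef
  have htr : (Aᴴ * A).trace = (x^(1/p))^2 + (y^(1/p))^2 + (w^(1/p))^2 + (z^(1/p))^2 := by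
    rw [hAe, Matrix.trace_fin_two]
    simp [Matrix.mul_apply, Fin.sum_univ_two, Matrix.conjTranspose_apply, Matrix.vecHead,
      Matrix.vecTail]
    ring
  have hdet : (Aᴴ * A).det = (x^(1/p) * z^(1/p) - y^(1/p) * w^(1/p))^2 := by
    rw [Matrix.det_mul, hAe, Matrix.det_fin_two_of, Matrix.det_conjTranspose]
    simp [Matrix.det_fin_two_of]
    ring
  have hsum : hM.eigenvalues 0 + hM.eigenvalues 1
      = (x^(1/p))^2 + (y^(1/p))^2 + (w^(1/p))^2 + (z^(1/p))^2 := by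
    have h := trace_eq_sum_eig hM
    rw [Fin.sum_univ_two, htr] at h
    linarith
  have hprod : hM.eigenvalues 0 * hM.eigenvalues 1
      = (x^(1/p) * z^(1/p) - y^(1/p) * w^(1/p))^2 := by
    have h := hM.det_eq_prod_eigenvalues
    rw [Fin.prod_univ_two, hdet] at h
    exact h.symm
  have hnn : ∀ i, 0 ≤ hM.eigenvalues i := fun i =>
    Matrix.eigenvalues_conjTranspose_mul_self_nonneg A i
  have hkey := sv_lemma hp1 (Real.rpow_nonneg hx (1/p)) (Real.rpow_nonneg hy (1/p))
    (Real.rpow_nonneg hw (1/p)) (Real.rpow_nonneg hz (1/p)) (hnn 0) (hnn 1) hsum hprod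
  have hxp : (x^(1/p))^p = x := by
    rw [← Real.rpow_mul hx, one_div, inv_mul_cancel₀ hp0, Real.rpow_one]
  have hzp : (z^(1/p))^p = z := by
    rw [← Real.rpow_mul hz, one_div, inv_mul_cancel₀ hp0, Real.rpow_one]
  have hg : gfun p !![x, y; w, z] = hM.eigenvalues 0 ^ (p/2) + hM.eigenvalues 1 ^ (p/2) := by
    rw [gfun, Fin.sum_univ_two]
  have hmain : x + z ≤ gfun p !![x, y; w, z] := by
    rw [hg]
    rw [hxp, hzp] at hkey
    exact hkey
  exact ⟨Real.rpow_le_rpow (by linarith) hmain (by positivity), hmain⟩
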